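/- arXiv:0907.1826 — 3 statements merged into one kernel-verified Lean document; each statement's English description precedes it below -/
import Mathlib

section
/- Let M = 3K be divisible by 3. The cyclic system u_k = ξ_{k-1} + ξ_k + ξ_{k+1} (indices mod M) has a solution ξ if and only if Σ_{j=0}^{K-1} u_{1+3j} = Σ_{j=0}^{K-1} u_{2+3j} = Σ_{j=0}^{K-1} u_{3+3j}. -/
private def xiAux (v : ℕ → ℝ) : ℕ → ℝ
  | 0 => 0
  | 1 => 0
  | (n+2) => v (n+1) - xiAux v (n+1) - xiAux v n

private lemma xiAux_step (v : ℕ → ℝ) (n : ℕ) :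
    v (n+1) = xiAux v n + xiAux v (n+1) + xiAux v (n+2) := by
  simp [xiAux]; ring

private lemma xiAux_three (v : ℕ → ℝ) (n : ℕ) :
    xiAux v (n+3) = xiAux v n + (v (n+2) - v (n+1)) := by
  show xiAux v (n+1+2) = _
  simp [xiAux]; ring

private lemma xiAux_mul3 (v : ℕ → ℝ) (t : ℕ) :
    xiAux v (3*t) = ∑ j ∈ Finset.range t, (v (3*j+2) - v (3*j+1)) := by
  induction t with
  | zero => simp [xiAux]
  | succ k ih =>
    rw [Finset.sum_range_succ, ← ih, show 3*(k+1) = 3*k+3 by ring, xiAux_three]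

private lemma xiAux_mul3_add1 (v : ℕ → ℝ) (t : ℕ) :
    xiAux v (3*t+1) = ∑ j ∈ Finset.range t, (v (3*j+3) - v (3*j+2)) := by
  induction t with
  | zero => simp [xiAux]
  | succ k ih =>
    rw [Finset.sum_range_succ, ← ih, show 3*(k+1)+1 = (3*k+1)+3 by ring, xiAux_three,
      show 3*k+1+2 = 3*k+3 by ring, show 3*k+1+1 = 3*k+2 by ring]

private lemma sum_range_three_mul (K : ℕ) (f : ℕ → ℝ) :
    ∑ n ∈ Finset.range (3 * K), f n
      = ∑ j ∈ Finset.range K, (f (3*j) + f (3*j+1) + f (3*j+2)) := by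
  induction K with
  | zero => simp
  | succ k ih =>
    rw [Finset.sum_range_succ, ← ih, show 3*(k+1) = (3*k+1+1)+1 by ring,
      Finset.sum_range_succ, Finset.sum_range_succ, Finset.sum_range_succ]
    ring_nf

private lemma sum_range_cast (M : ℕ) [NeZero M] (c : ℕ) (ξ : ZMod M → ℝ) :
    ∑ n ∈ Finset.range M, ξ ((c + n : ℕ) : ZMod M) = ∑ k : ZMod M, ξ k := by
  apply Finset.sum_nbij' (i := fun n => ((c + n : ℕ) : ZMod M))
    (j := fun k => (k - (c : ZMod M)).val)
  · intro a _; exact Finset.mem_univ _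
  · intro a _; exact Finset.mem_range.mpr (ZMod.val_lt _)
  · intro a ha
    have h : ((c + a : ℕ) : ZMod M) - (c : ZMod M) = (a : ZMod M) := by push_cast; ring
    rw [h, ZMod.val_natCast_of_lt (Finset.mem_range.mp ha)]
  · intro b _
    push_cast
    rw [ZMod.natCast_val, ZMod.cast_id]
    ring
  · intro a _; rfl

/-- For `M = 3K`, the cyclic system `u k = ξ (k-1) + ξ k + ξ (k+1)` has a solution iff the
three sums of `u` over the residue classes `1, 2, 3 (mod 3)` coincide. -/
theorem sym_div3_solvable_iff (M K : ℕ) (hK : 0 < K) (hM : M = 3 * K)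
    (u : ZMod M → ℝ) :
    (∃ ξ : ZMod M → ℝ, ∀ k : ZMod M, u k = ξ (k - 1) + ξ k + ξ (k + 1)) ↔
      (∑ j ∈ Finset.range K, u ((1 + 3 * j : ℕ) : ZMod M) =
          ∑ j ∈ Finset.range K, u ((2 + 3 * j : ℕ) : ZMod M) ∧
        ∑ j ∈ Finset.range K, u ((2 + 3 * j : ℕ) : ZMod M) =
          ∑ j ∈ Finset.range K, u ((3 + 3 * j : ℕ) : ZMod M)) := by
  have hM0 : 0 < M := by omega
  haveI : NeZero M := ⟨by omega⟩
  have hM1 : (1 : ℕ) ≤ M := hM0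
  constructor
  · rintro ⟨ξ, hξ⟩
    -- each class sum equals the total sum of ξ
    have key : ∀ s : ℕ,
        ∑ j ∈ Finset.range K, u (((s+1) + 3 * j : ℕ) : ZMod M) = ∑ k : ZMod M, ξ k := by
      intro s
      have step : ∀ j : ℕ, u (((s+1) + 3 * j : ℕ) : ZMod M)
          = ξ ((s + 3*j : ℕ)) + ξ ((s + (3*j+1) : ℕ)) + ξ ((s + (3*j+2) : ℕ)) := by
        intro j
        rw [hξ]
        have e1 : ((s + 3 * j : ℕ) : ZMod M) = ((s+1 + 3*j : ℕ) : ZMod M) - 1 := by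
          push_cast; ring
        have e2 : ((s + (3 * j + 1) : ℕ) : ZMod M) = ((s+1 + 3*j : ℕ) : ZMod M) := by
          push_cast; ring
        have e3 : ((s + (3 * j + 2) : ℕ) : ZMod M) = ((s+1 + 3*j : ℕ) : ZMod M) + 1 := by
          push_cast; ring
        rw [e1, e2, e3]
      calc ∑ j ∈ Finset.range K, u (((s+1) + 3 * j : ℕ) : ZMod M)
          = ∑ j ∈ Finset.range K, (ξ ((s + 3*j : ℕ)) + ξ ((s + (3*j+1) : ℕ))
              + ξ ((s + (3*j+2) : ℕ))) := Finset.sum_congr rfl fun j _ => step j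
        _ = ∑ n ∈ Finset.range (3*K), ξ ((s + n : ℕ)) := by
            rw [sum_range_three_mul]
        _ = ∑ k : ZMod M, ξ k := by rw [← hM]; exact sum_range_cast M s ξ
    have k1 := key 0
    have k2 := key 1
    have k3 := key 2
    simp only [Nat.zero_add, Nat.reduceAdd] at k1 k2 k3
    exact ⟨k1.trans k2.symm, k2.trans k3.symm⟩
  · rintro ⟨h12, h23⟩
    set v : ℕ → ℝ := fun n => u ((n : ℕ) : ZMod M) with hv
    have hvM : ∀ n : ℕ, v (n + M) = v n := by
      intro n; simp [hv]
    -- periodicity start values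
    have hS : ∀ (r : ℕ), ∑ j ∈ Finset.range K, v (3*j + r) = ∑ j ∈ Finset.range K, u ((r + 3 * j : ℕ) : ZMod M) := by
      intro r
      refine Finset.sum_congr rfl fun j _ => ?_
      simp [hv, Nat.add_comm]
    have hxiM : xiAux v M = 0 := by
      rw [hM, xiAux_mul3, Finset.sum_sub_distrib, hS 2, hS 1, h12, sub_self]
    have hxiM1 : xiAux v (M + 1) = 0 := by
      rw [hM, xiAux_mul3_add1, Finset.sum_sub_distrib, hS 3, hS 2, h23, sub_self]
    -- periodicity
    have hper : ∀ n, xiAux v (n + M) = xiAux v n := by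
      have hpair : ∀ n, xiAux v (n + M) = xiAux v n ∧ xiAux v (n + 1 + M) = xiAux v (n + 1) := by
        intro n
        induction n with
        | zero =>
          constructor
          · simpa [xiAux] using hxiM
          · rw [Nat.zero_add, Nat.add_comm 1 M]; simpa [xiAux] using hxiM1
        | succ k ih =>
          refine ⟨ih.2, ?_⟩
          have e : k + 1 + 1 + M = (k + M) + 2 := by ring
          rw [e, show k+1+1 = k+2 from rfl]
          have h1 : xiAux v (k+M+2) = v (k+M+1) - xiAux v (k+M+1) - xiAux v (k+M) := by
            simp [xiAux]
          have h2 : xiAux v (k+2) = v (k+1) - xiAux v (k+1) - xiAux v k := by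
            simp [xiAux]
          have e1 : v (k+M+1) = v (k+1) := by rw [show k+M+1 = (k+1)+M by ring, hvM]
          have e2 : xiAux v (k+M+1) = xiAux v (k+1) := by
            rw [show k+M+1 = (k+1)+M by ring]; exact ih.2
          rw [h1, h2, e1, e2, ih.1]
      exact fun n => (hpair n).1
    have hcongr : ∀ m n : ℕ, m ≡ n [MOD M] → xiAux v m = xiAux v n := by
      have hmul : ∀ t m, xiAux v (m + M * t) = xiAux v m := by
        intro t
        induction t with
        | zero => simp
        | succ s ih => intro m; rw [show m + M*(s+1) = (m + M*s) + M by ring, hper, ih]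
      intro m n h
      rcases le_total m n with hle | hle
      · obtain ⟨t, ht⟩ := (Nat.modEq_iff_dvd' hle).mp h
        have : n = m + M * t := by omega
        rw [this, hmul]
      · obtain ⟨t, ht⟩ := (Nat.modEq_iff_dvd' hle).mp h.symm
        have : m = n + M * t := by omega
        rw [this, hmul]
    refine ⟨fun k => xiAux v k.val, fun k => ?_⟩
    have hk1 : xiAux v ((k - 1).val) = xiAux v (k.val + (M - 1)) := by
      apply hcongr
      rw [← ZMod.natCast_eq_natCast_iff]
      rw [ZMod.natCast_val, ZMod.cast_id]
      push_cast [Nat.cast_sub hM1, ZMod.natCast_val, ZMod.cast_id, ZMod.natCast_self]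
      ring
    have hk2 : xiAux v (k.val) = xiAux v (k.val + (M - 1) + 1) := by
      rw [show k.val + (M-1) + 1 = k.val + M by omega, hper]
    have hk3 : xiAux v ((k + 1).val) = xiAux v (k.val + (M - 1) + 2) := by
      apply hcongr
      rw [← ZMod.natCast_eq_natCast_iff]
      rw [ZMod.natCast_val, ZMod.cast_id]
      push_cast [Nat.cast_sub hM1, ZMod.natCast_val, ZMod.cast_id, ZMod.natCast_self]
      ring
    have hu : u k = v (k.val + (M - 1) + 1) := by
      rw [show k.val + (M-1) + 1 = k.val + M by omega, hvM]
      simp [hv, ZMod.natCast_val, ZMod.cast_id]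
    rw [hu]
    show _ = xiAux v ((k-1).val) + xiAux v (k.val) + xiAux v ((k+1).val)
    rw [hk1, hk2, hk3]
    exact xiAux_step v (k.val + (M-1))
end

section
/- Let M = 3K be divisible by 3, and suppose u satisfies the compatibility condition Σ_{j} u_{1+3j} = Σ_j u_{2+3j} = Σ_j u_{3+3j}. Then for any real numbers a, b there is a solution ξ of the cyclic system u_k = ξ_{k-1} + ξ_k + ξ_{k+1} (indices mod M) with ξ_1 = a and ξ_2 = b. -/
/-- For `M = 3K` with the compatibility condition, for any reals `a, b` there is a solution
`ξ` of the cyclic system `u k = ξ (k-1) + ξ k + ξ (k+1)` with `ξ 1 = a` and `ξ 2 = b`. -/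
theorem sym_div3_two_parameter_family (M K : ℕ) (hK : 0 < K) (hM : M = 3 * K)
    (u : ZMod M → ℝ)
    (hcond1 : ∑ j ∈ Finset.range K, u ((1 + 3 * j : ℕ) : ZMod M) =
      ∑ j ∈ Finset.range K, u ((2 + 3 * j : ℕ) : ZMod M))
    (hcond2 : ∑ j ∈ Finset.range K, u ((2 + 3 * j : ℕ) : ZMod M) =
      ∑ j ∈ Finset.range K, u ((3 + 3 * j : ℕ) : ZMod M)) :
    ∀ a b : ℝ, ∃ ξ : ZMod M → ℝ,
      ξ 1 = a ∧ ξ 2 = b ∧ ∀ k : ZMod M, u k = ξ (k - 1) + ξ k + ξ (k + 1) := by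
  intro a b
  haveI : NeZero M := ⟨by omega⟩
  have hM3 : 3 ≤ M := by omega
  set base : ℕ → ℝ := fun r => if r = 0 then u 1 - a - b else if r = 1 then a else b with hbase
  set g : ℕ → ℝ := fun n => base (n % 3)
      + ∑ i ∈ Finset.range (n / 3),
          (u ((n % 3 + 3 * i + 2 : ℕ) : ZMod M) - u ((n % 3 + 3 * i + 1 : ℕ) : ZMod M)) with hg
  -- Lemma A : step of g
  have lemA : ∀ n : ℕ, g (n + 3) = g n + (u ((n + 2 : ℕ) : ZMod M) - u ((n + 1 : ℕ) : ZMod M)) := by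
    intro n
    have h1 : (n + 3) % 3 = n % 3 := Nat.add_mod_right n 3
    have h2 : (n + 3) / 3 = n / 3 + 1 := Nat.add_div_right n (by norm_num)
    have h3 : n % 3 + 3 * (n / 3) = n := Nat.mod_add_div n 3
    rw [hg]
    simp only [h1, h2, Finset.sum_range_succ, h3]
    ring
  -- cyclic shift of one residue class
  have shift : ∑ i ∈ Finset.range K, u ((4 + 3 * i : ℕ) : ZMod M)
      = ∑ i ∈ Finset.range K, u ((1 + 3 * i : ℕ) : ZMod M) := by
    obtain ⟨K', rfl⟩ : ∃ K', K = K' + 1 := ⟨K - 1, by omega⟩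
    rw [Finset.sum_range_succ, Finset.sum_range_succ']
    have h4 : ((4 + 3 * K' : ℕ) : ZMod M) = ((1 + 3 * 0 : ℕ) : ZMod M) := by
      have h5 : (4 + 3 * K' : ℕ) = M + (1 + 3 * 0) := by omega
      rw [h5, Nat.cast_add, ZMod.natCast_self, zero_add]
    rw [h4]
    have e : ∀ i, ((1 + 3 * (i + 1) : ℕ) : ZMod M) = ((4 + 3 * i : ℕ) : ZMod M) := by
      intro i; congr 1; omega
    simp only [e]
  -- Lemma B : cyclic sums vanish
  have lemB : ∀ r < 3, ∑ i ∈ Finset.range K,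
      (u ((r + 3 * i + 2 : ℕ) : ZMod M) - u ((r + 3 * i + 1 : ℕ) : ZMod M)) = 0 := by
    intro r hr
    rw [Finset.sum_sub_distrib]
    have e : ∀ (c d : ℕ), r + c = d →
        (∑ i ∈ Finset.range K, u ((r + 3 * i + c : ℕ) : ZMod M))
        = ∑ i ∈ Finset.range K, u ((d + 3 * i : ℕ) : ZMod M) := by
      intro c d hcd
      refine Finset.sum_congr rfl fun i _ => ?_
      have h7 : r + 3 * i + c = d + 3 * i := by omega
      rw [h7]
    interval_cases r
    · rw [e 2 2 (by norm_num), e 1 1 (by norm_num)]; linarith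
    · rw [e 2 3 (by norm_num), e 1 2 (by norm_num)]; linarith
    · rw [e 2 4 (by norm_num), e 1 3 (by norm_num), shift]; linarith
  -- Lemma C : cyclic step
  have lemC : ∀ x : ZMod M, g (x + 3).val = g x.val + (u (x + 2) - u (x + 1)) := by
    intro x
    have hv : x.val < M := ZMod.val_lt x
    have hx : ((x.val : ℕ) : ZMod M) = x := ZMod.natCast_zmod_val x
    have hx2 : x + 2 = ((x.val + 2 : ℕ) : ZMod M) := by push_cast [hx]; ring
    have hx1 : x + 1 = ((x.val + 1 : ℕ) : ZMod M) := by push_cast [hx]; ring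
    have hx3 : x + 3 = ((x.val + 3 : ℕ) : ZMod M) := by push_cast [hx]; ring
    rw [hx3, ZMod.val_natCast]
    by_cases hlt : x.val + 3 < M
    · rw [Nat.mod_eq_of_lt hlt, lemA x.val, ← hx2, ← hx1]
    · -- wrap-around
      set n := x.val with hn
      set s := n + 3 - M with hs
      have hs3 : s < 3 := by omega
      have hmod : (n + 3) % M = s := by
        have h6 : n + 3 = M + s := by omega
        rw [h6, Nat.add_mod_left, Nat.mod_eq_of_lt (by omega)]
      rw [hmod, hx2, hx1]
      have hnmod : n % 3 = s := by omega
      have hndiv : n / 3 = K - 1 := by omega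
      have hsmod : s % 3 = s := Nat.mod_eq_of_lt hs3
      have hsdiv : s / 3 = 0 := Nat.div_eq_of_lt hs3
      have gs : g s = base s := by rw [hg]; simp [hsmod, hsdiv]
      have gn : g n = base s + ∑ i ∈ Finset.range (K - 1),
          (u ((s + 3 * i + 2 : ℕ) : ZMod M) - u ((s + 3 * i + 1 : ℕ) : ZMod M)) := by
        rw [hg]; simp only [hnmod, hndiv]
      have hB := lemB s hs3
      obtain ⟨K', hK'⟩ : ∃ K', K = K' + 1 := ⟨K - 1, by omega⟩
      rw [hK', Finset.sum_range_succ] at hB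
      have hK1 : K - 1 = K' := by omega
      have e2 : ((s + 3 * K' + 2 : ℕ) : ZMod M) = ((n + 2 : ℕ) : ZMod M) := by
        congr 1; omega
      have e1 : ((s + 3 * K' + 1 : ℕ) : ZMod M) = ((n + 1 : ℕ) : ZMod M) := by
        congr 1; omega
      rw [e2, e1] at hB
      rw [gs, gn, hK1]
      linarith
  -- values of small elements
  have v1 : (1 : ZMod M).val = 1 := by
    rw [show (1 : ZMod M) = ((1 : ℕ) : ZMod M) by norm_cast, ZMod.val_natCast,
      Nat.mod_eq_of_lt (by omega)]
  have v2 : (2 : ZMod M).val = 2 := by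
    rw [show (2 : ZMod M) = ((2 : ℕ) : ZMod M) by norm_cast, ZMod.val_natCast,
      Nat.mod_eq_of_lt (by omega)]
  refine ⟨fun x => g x.val, ?_, ?_, ?_⟩
  · show g (1 : ZMod M).val = a
    rw [v1, hg]; simp [hbase]
  · show g (2 : ZMod M).val = b
    rw [v2, hg]; simp [hbase]
  · -- the system
    have hstep : ∀ x : ZMod M,
        g (x + 1 - 1).val + g (x + 1).val + g (x + 1 + 1).val - u (x + 1)
        = g (x - 1).val + g x.val + g (x + 1).val - u x := by
      intro x
      have h := lemC (x - 1)
      rw [show x - 1 + 3 = x + 1 + 1 by ring, show x - 1 + 2 = x + 1 by ring,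
        show x - 1 + 1 = x by ring] at h
      rw [show x + 1 - 1 = x by ring]
      linarith
    have hE1 : g ((1 : ZMod M) - 1).val + g (1 : ZMod M).val + g ((1 : ZMod M) + 1).val
        - u 1 = 0 := by
      rw [show (1 : ZMod M) - 1 = 0 by ring, show (1 : ZMod M) + 1 = 2 by ring,
        ZMod.val_zero, v1, v2, hg]
      simp [hbase]
      ring
    have hall : ∀ m : ℕ,
        g ((1 + (m : ZMod M)) - 1).val + g (1 + (m : ZMod M)).val
          + g ((1 + (m : ZMod M)) + 1).val - u (1 + (m : ZMod M)) = 0 := by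
      intro m
      induction m with
      | zero => simpa using hE1
      | succ k ih =>
        have e : (1 : ZMod M) + ((k + 1 : ℕ) : ZMod M) = (1 + (k : ZMod M)) + 1 := by
          push_cast; ring
        rw [e, hstep]
        exact ih
    intro k
    have hk := hall (k - 1).val
    rw [ZMod.natCast_zmod_val, add_sub_cancel] at hk
    show u k = g (k - 1).val + g k.val + g (k + 1).val
    linarith
end

section
/- Let v : ℤ/M → ℕ be such that every maximal run of positive entries has length at most 2 and every maximal run of zero entries has length at most 2, and every run of two consecutive zeros is immediately preceded and followed by a single positive entry (no pattern (+,+,0,0) or (0,0,+,+)). Then any occurrence of the pattern (0,0,+,0,0) (i.e. v_{k-2}=v_{k-1}=0, v_k>0, v_{k+1}=v_{k+2}=0) extends to the pattern (0,+,0,0,+,0,0,+,0) centered at k. -/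
/-- Under the structural constraints (no three consecutive positives, no three consecutive
zeros, no `(+,+,0,0)` or `(0,0,+,+)` patterns), every occurrence of `(0,0,+,0,0)` extends
to the pattern `(0,+,0,0,+,0,0,+,0)` centred at `k`. -/
theorem isolated_positive_extends (M : ℕ) (hM : 9 ≤ M) (v : ZMod M → ℕ)
    (hpos3 : ∀ k : ZMod M, ¬ (0 < v k ∧ 0 < v (k + 1) ∧ 0 < v (k + 2)))
    (hzero3 : ∀ k : ZMod M, ¬ (v k = 0 ∧ v (k + 1) = 0 ∧ v (k + 2) = 0))
    (hppzz : ∀ k : ZMod M, ¬ (0 < v k ∧ 0 < v (k + 1) ∧ v (k + 2) = 0 ∧ v (k + 3) = 0))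
    (hzzpp : ∀ k : ZMod M, ¬ (v k = 0 ∧ v (k + 1) = 0 ∧ 0 < v (k + 2) ∧ 0 < v (k + 3))) :
    ∀ k : ZMod M,
      v (k - 2) = 0 → v (k - 1) = 0 → 0 < v k → v (k + 1) = 0 → v (k + 2) = 0 →
        v (k - 4) = 0 ∧ 0 < v (k - 3) ∧ 0 < v (k + 3) ∧ v (k + 4) = 0 := by
  intro k h1 h2 h3 h4 h5
  have hp3 : 0 < v (k + 3) := by
    rcases Nat.eq_zero_or_pos (v (k + 3)) with h | h
    · exact absurd ⟨h4, by rwa [show k + 1 + 1 = k + 2 by ring],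
        by rwa [show k + 1 + 2 = k + 3 by ring]⟩ (hzero3 (k + 1))
    · exact h
  have hm3 : 0 < v (k - 3) := by
    rcases Nat.eq_zero_or_pos (v (k - 3)) with h | h
    · exact absurd ⟨h, by rwa [show k - 3 + 1 = k - 2 by ring],
        by rwa [show k - 3 + 2 = k - 1 by ring]⟩ (hzero3 (k - 3))
    · exact h
  refine ⟨?_, hm3, hp3, ?_⟩
  · rcases Nat.eq_zero_or_pos (v (k - 4)) with h | h
    · exact h
    · exact absurd ⟨h, by rwa [show k - 4 + 1 = k - 3 by ring],
        by rwa [show k - 4 + 2 = k - 2 by ring],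
        by rwa [show k - 4 + 3 = k - 1 by ring]⟩ (hppzz (k - 4))
  · rcases Nat.eq_zero_or_pos (v (k + 4)) with h | h
    · exact h
    · exact absurd ⟨h4, by rwa [show k + 1 + 1 = k + 2 by ring],
        by rwa [show k + 1 + 2 = k + 3 by ring],
        by rwa [show k + 1 + 3 = k + 4 by ring]⟩ (hzzpp (k + 1))
end
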